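/- For the geodesic line γ(t) = (w_0(1 + e^{2t} w_0)^{-1}, w(1 + e^{2t} w_0)^{-1}) in the Siegel domain of quaternionic hyperbolic n-space, with (w_0,w) a point of the boundary satisfying tr w_0 = n(w) and w_0 ≠ 0, the function s(t) = tr(w_0(1+e^{2t}w_0)^{-1}) - n(w(1+e^{2t}w_0)^{-1}) equals 2 e^{2t} n(w_0)/n(1 + e^{2t} w_0), and its maximum over t ∈ R is 2 n(w_0) / (2 n(w_0)^{1/2} + n(w)), attained at e^{2t} = n(w_0)^{-1/2}. -/

import Mathlib

noncomputable section

open Quaternion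

variable (n : ℕ)

/-- The height function `s(t) = tr(w₀(1+e^{2t}w₀)⁻¹) - n(w(1+e^{2t}w₀)⁻¹)` along the
geodesic line `γ(t) = (w₀(1+e^{2t}w₀)⁻¹, w(1+e^{2t}w₀)⁻¹)` of the Siegel domain. -/
def geodHeight (w₀ : Quaternion ℝ) (w : Fin (n - 1) → Quaternion ℝ) (t : ℝ) : ℝ :=
  2 * (w₀ * ((1 : Quaternion ℝ) + Real.exp (2 * t) • w₀)⁻¹).re -
    ∑ i, normSq (w i * ((1 : Quaternion ℝ) + Real.exp (2 * t) • w₀)⁻¹)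

/-- Along the geodesic `γ(t) = (w₀(1+e^{2t}w₀)⁻¹, w(1+e^{2t}w₀)⁻¹)` from a boundary
point `(w₀,w)` (with `tr w₀ = n(w)`, `w₀ ≠ 0`) to `(0,0)`, the height function
`s(t)` equals `2 e^{2t} n(w₀)/n(1+e^{2t}w₀)`, and its maximum over `t ∈ ℝ` is
`2 n(w₀)/(2 n(w₀)^{1/2} + n(w))`, attained at `e^{2t} = n(w₀)^{-1/2}`. -/
theorem geodesic_height_formula_and_max (hn : 2 ≤ n)
    (w₀ : Quaternion ℝ) (w : Fin (n - 1) → Quaternion ℝ) (hw₀ : w₀ ≠ 0)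
    (htr : w₀ + star w₀ = ((∑ i, normSq (w i) : ℝ) : Quaternion ℝ)) :
    (∀ t : ℝ, geodHeight n w₀ w t
        = 2 * Real.exp (2 * t) * normSq w₀
          / normSq ((1 : Quaternion ℝ) + Real.exp (2 * t) • w₀)) ∧
    (∀ t : ℝ, geodHeight n w₀ w t
        ≤ 2 * normSq w₀ / (2 * Real.sqrt (normSq w₀) + ∑ i, normSq (w i))) ∧
    (∀ t : ℝ, Real.exp (2 * t) = (Real.sqrt (normSq w₀))⁻¹ →
        geodHeight n w₀ w t
          = 2 * normSq w₀ / (2 * Real.sqrt (normSq w₀) + ∑ i, normSq (w i))) := by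
  set S : ℝ := ∑ i, normSq (w i) with hS
  have hs2 : S = 2 * w₀.re := by
    have h := congrArg QuaternionAlgebra.re htr
    simp only [Quaternion.re_add, Quaternion.re_star, Quaternion.re_coe] at h
    linarith
  have hN : 0 < normSq w₀ := by
    have := Quaternion.normSq_ne_zero (a := w₀)
    have h2 := Quaternion.normSq_nonneg (a := w₀)
    rcases lt_or_eq_of_le h2 with h | h
    · exact h
    · exact absurd h.symm (this.mpr hw₀)
  have hSnn : 0 ≤ S := Finset.sum_nonneg fun i _ => Quaternion.normSq_nonneg
  have hsq : Real.sqrt (normSq w₀) ^ 2 = normSq w₀ := Real.sq_sqrt hN.le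
  have hsqpos : 0 < Real.sqrt (normSq w₀) := Real.sqrt_pos.mpr hN
  -- key computations for each t
  have hnu : ∀ a : ℝ, normSq ((1 : Quaternion ℝ) + a • w₀)
      = 1 + a * S + a ^ 2 * normSq w₀ := by
    intro a
    rw [hs2]
    simp only [Quaternion.normSq_def', Quaternion.re_add, Quaternion.imI_add,
      Quaternion.imJ_add, Quaternion.imK_add, Quaternion.re_one, Quaternion.imI_one,
      Quaternion.imJ_one, Quaternion.imK_one, Quaternion.re_smul, Quaternion.imI_smul,
      Quaternion.imJ_smul, Quaternion.imK_smul, smul_eq_mul]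
    ring
  have hnupos : ∀ a : ℝ, 0 < a → 0 < 1 + a * S + a ^ 2 * normSq w₀ := by
    intro a ha
    have : 0 < a ^ 2 * normSq w₀ := by positivity
    nlinarith
  have key : ∀ t : ℝ, geodHeight n w₀ w t
      = 2 * Real.exp (2 * t) * normSq w₀
        / (1 + Real.exp (2 * t) * S + Real.exp (2 * t) ^ 2 * normSq w₀) := by
    intro t
    set a := Real.exp (2 * t) with ha
    have ha0 : 0 < a := Real.exp_pos _
    set u : Quaternion ℝ := 1 + a • w₀ with hu
    have hnu' : normSq u = 1 + a * S + a ^ 2 * normSq w₀ := hnu a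
    have hnu0 : (0:ℝ) < normSq u := hnu' ▸ hnupos a ha0
    have hre : (w₀ * u⁻¹).re = (normSq u)⁻¹ * (w₀.re + a * normSq w₀) := by
      rw [Quaternion.inv_def, mul_smul_comm, Quaternion.re_smul, smul_eq_mul]
      congr 1
      simp only [hu, Quaternion.re_mul, star_add, star_one, Quaternion.star_smul,
        Quaternion.re_add, Quaternion.imI_add, Quaternion.imJ_add, Quaternion.imK_add,
        Quaternion.re_one, Quaternion.imI_one, Quaternion.imJ_one, Quaternion.imK_one,
        Quaternion.re_smul, Quaternion.imI_smul, Quaternion.imJ_smul, Quaternion.imK_smul,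
        Quaternion.re_star, Quaternion.imI_star, Quaternion.imJ_star, Quaternion.imK_star,
        smul_eq_mul, Quaternion.normSq_def']
      ring
    have hsum : ∑ i, normSq (w i * u⁻¹) = S * (normSq u)⁻¹ := by
      rw [hS, Finset.sum_mul]
      refine Finset.sum_congr rfl fun i _ => ?_
      rw [map_mul, Quaternion.normSq_inv]
    rw [geodHeight]
    rw [show ((1 : Quaternion ℝ) + Real.exp (2 * t) • w₀) = u from rfl]
    rw [hre, hsum, hnu', hs2]
    field_simp
    ring
  refine ⟨fun t => by rw [key t, hnu], fun t => ?_, fun t hat => ?_⟩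
  · rw [key t]
    set a := Real.exp (2 * t) with ha
    have ha0 : 0 < a := Real.exp_pos _
    have hd1 : 0 < 1 + a * S + a ^ 2 * normSq w₀ := hnupos a ha0
    have hd2 : 0 < 2 * Real.sqrt (normSq w₀) + S := by positivity
    rw [div_le_div_iff₀ hd1 hd2]
    nlinarith [sq_nonneg (1 - a * Real.sqrt (normSq w₀)), mul_pos ha0 hN, hsqpos,
      mul_nonneg ha0.le hSnn, mul_nonneg hSnn hsqpos.le]
  · rw [key t, hat]
    have h1 : (Real.sqrt (normSq w₀))⁻¹ ^ 2 * normSq w₀ = 1 := by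
      rw [inv_pow, hsq]
      field_simp
    have hd2 : 0 < 2 * Real.sqrt (normSq w₀) + S := by positivity
    rw [h1]
    rw [div_eq_div_iff (by positivity) hd2.ne.symm]
    have : (Real.sqrt (normSq w₀))⁻¹ * Real.sqrt (normSq w₀) = 1 := by
      field_simp
    field_simp
    nlinarith [hsq]
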